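/- arXiv:1804.09838 — 3 statements merged into one kernel-verified Lean document; each statement's English description precedes it below -/
import Mathlib

section
/- Let A₁,…,Aₙ be real matrices with Aᵢ ∈ ℝ^{c_{i-1}×c_i} forming a complex (Aᵢ ∘ A_{i+1} = 0 for all i). Set rᵢ = rank Aᵢ (with r₀ = r_{n+1} = 0) and hᵢ = cᵢ − (rᵢ + r_{i+1}). Then there exist orthogonal matrices U₀,…,Uₙ with Uᵢ ∈ O(cᵢ) and positive diagonal matrices Σᵢ of size rᵢ×rᵢ such that Uᵢ₋₁ᵀ Aᵢ Uᵢ is the block matrix with block rows of sizes (r_{i-1}, rᵢ, h_{i-1}) and block columns of sizes (rᵢ, r_{i+1}, hᵢ), whose only nonzero block is Σᵢ in position (row block 2, column block 1). -/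
open Matrix

open LinearMap Module
open scoped RealInnerProductSpace

lemma toEuclideanLin_apply' {p q : ℕ} (M : Matrix (Fin p) (Fin q) ℝ)
    (x : EuclideanSpace ℝ (Fin q)) (a : Fin p) :
    Matrix.toEuclideanLin M x a = ∑ b, M a b * x b := by
  simp [Matrix.toEuclideanLin_apply, Matrix.mulVec, dotProduct]

lemma euclid_inner_eq {p : ℕ} (x y : EuclideanSpace ℝ (Fin p)) :
    ⟪x, y⟫ = ∑ a, x a * y a := by
  simp [PiLp.inner_apply, RCLike.inner_apply, conj_trivial]
  exact Finset.sum_congr rfl fun _ _ => mul_comm _ _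

def vpAux {c r : ℕ → ℕ}
    (vv : ∀ i, Fin (r (i+1)) → EuclideanSpace ℝ (Fin (c (i+1)))) :
    ∀ i, Fin (r i) → EuclideanSpace ℝ (Fin (c i))
  | 0 => fun _ => 0
  | (m+1) => vv m

@[simp] lemma vpAux_succ {c r : ℕ → ℕ}
    (vv : ∀ i, Fin (r (i+1)) → EuclideanSpace ℝ (Fin (c (i+1)))) (m : ℕ) :
    vpAux (c := c) vv (m+1) = vv m := rfl

def wAux {cc ri rii : ℕ} (vp : Fin ri → EuclideanSpace ℝ (Fin cc))
    (uu : Fin rii → EuclideanSpace ℝ (Fin cc)) : Fin cc → EuclideanSpace ℝ (Fin cc) :=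
  fun j => if hlt : (j : ℕ) < ri then vp ⟨j, hlt⟩
    else if h2 : (j : ℕ) - ri < rii then uu ⟨(j : ℕ) - ri, h2⟩ else 0

def idxAux {cc : ℕ} (ri rii : ℕ) (j : Fin cc) (hj : (j : ℕ) < ri + rii) : Fin ri ⊕ Fin rii :=
  if hlt : (j : ℕ) < ri then .inl ⟨j, hlt⟩ else .inr ⟨(j : ℕ) - ri, by omega⟩

lemma wAux_of_lt {cc ri rii : ℕ} (vp : Fin ri → EuclideanSpace ℝ (Fin cc))
    (uu : Fin rii → EuclideanSpace ℝ (Fin cc)) (j : Fin cc) (hlt : (j : ℕ) < ri) :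
    wAux vp uu j = vp ⟨j, hlt⟩ := dif_pos hlt

lemma wAux_mid {cc ri rii : ℕ} (vp : Fin ri → EuclideanSpace ℝ (Fin cc))
    (uu : Fin rii → EuclideanSpace ℝ (Fin cc)) (j : Fin cc) (h1 : ¬ (j : ℕ) < ri)
    (h2 : (j : ℕ) - ri < rii) :
    wAux vp uu j = uu ⟨(j : ℕ) - ri, h2⟩ := by
  rw [wAux, dif_neg h1, dif_pos h2]

lemma wAux_eq_elim {cc ri rii : ℕ} (vp : Fin ri → EuclideanSpace ℝ (Fin cc))
    (uu : Fin rii → EuclideanSpace ℝ (Fin cc)) (j : Fin cc) (hj : (j : ℕ) < ri + rii) :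
    wAux vp uu j = Sum.elim vp uu (idxAux ri rii j hj) := by
  rw [wAux, idxAux]
  by_cases hlt : (j : ℕ) < ri
  · rw [dif_pos hlt, dif_pos hlt]; rfl
  · rw [dif_neg hlt, dif_neg hlt, dif_pos (by omega)]; rfl

lemma idxAux_inj {cc : ℕ} {ri rii : ℕ} {j l : Fin cc} (hj : (j : ℕ) < ri + rii)
    (hl : (l : ℕ) < ri + rii) (heq : idxAux ri rii j hj = idxAux ri rii l hl) : j = l := by
  rw [idxAux, idxAux] at heq
  by_cases h1 : (j : ℕ) < ri <;> by_cases h2 : (l : ℕ) < ri <;>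
    simp only [h1, h2, dif_pos, dif_neg, not_false_iff] at heq
  · exact Fin.ext (by simpa using congrArg Fin.val (Sum.inl_injective heq))
  · exact absurd heq (by simp)
  · exact absurd heq (by simp)
  · have := congrArg Fin.val (Sum.inr_injective heq)
    simp only at this
    exact Fin.ext (by omega)

lemma exists_svd {m k : ℕ} (T : EuclideanSpace ℝ (Fin k) →ₗ[ℝ] EuclideanSpace ℝ (Fin m))
    (rT : ℕ) (hrT : rT = finrank ℝ (LinearMap.range T)) :
    ∃ (v : Fin rT → EuclideanSpace ℝ (Fin k)) (u : Fin rT → EuclideanSpace ℝ (Fin m))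
      (σ : Fin rT → ℝ),
      Orthonormal ℝ v ∧ Orthonormal ℝ u ∧ (∀ j, 0 < σ j) ∧ (∀ j, T (v j) = σ j • u j) ∧
      (∀ j, v j ∈ (LinearMap.ker T)ᗮ) ∧ (∀ j, u j ∈ LinearMap.range T) ∧
      (∀ x, (∀ j, ⟪v j, x⟫ = 0) → T x = 0) := by
  classical
  set S : EuclideanSpace ℝ (Fin k) →ₗ[ℝ] EuclideanSpace ℝ (Fin k) := (adjoint T) ∘ₗ T with hSdef
  have hST : ∀ x y, ⟪S x, y⟫ = ⟪T x, T y⟫ := by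
    intro x y
    simp [hSdef, LinearMap.adjoint_inner_left]
  have hS : S.IsSymmetric := by
    intro x y
    rw [hST]
    simp [hSdef, LinearMap.adjoint_inner_right]
  have hd : finrank ℝ (EuclideanSpace ℝ (Fin k)) = k := finrank_euclideanSpace_fin
  set b := hS.eigenvectorBasis hd with hb
  set μ := hS.eigenvalues hd with hμdef
  have key : ∀ j, S (b j) = μ j • b j := fun j => by
    have := hS.apply_eigenvectorBasis hd j
    rw [← hb, ← hμdef] at this
    exact_mod_cast this
  have hTb : ∀ j l, ⟪T (b j), T (b l)⟫ = μ j * ⟪b j, b l⟫ := by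
    intro j l
    rw [← hST, key, real_inner_smul_left]
  have hbb : ∀ j, ⟪b j, b j⟫ = 1 := by
    intro j
    rw [real_inner_self_eq_norm_mul_norm, b.orthonormal.1 j]; norm_num
  have hμ0 : ∀ j, 0 ≤ μ j := by
    intro j
    have h1 : μ j * ⟪b j, b j⟫ = ⟪T (b j), T (b j)⟫ := (hTb j j).symm
    rw [hbb, mul_one] at h1
    rw [h1]
    exact real_inner_self_nonneg
  have h0 : ∀ j, μ j = 0 → T (b j) = 0 := by
    intro j hj
    have := hTb j j
    rw [hj, zero_mul] at this
    exact inner_self_eq_zero.mp this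
  have hmemP : ∀ j, μ j ≠ 0 → b j ∈ (LinearMap.ker T)ᗮ := by
    intro j hj
    rw [Submodule.mem_orthogonal]
    intro y hy
    have h1 : ⟪T (b j), T y⟫ = μ j * ⟪b j, y⟫ := by
      rw [← hST, key, real_inner_smul_left]
    rw [LinearMap.mem_ker.mp hy, inner_zero_right] at h1
    have h2 : ⟪b j, y⟫ = 0 := by
      rcases mul_eq_zero.mp h1.symm with h | h
      · exact absurd h hj
      · exact h
    rw [real_inner_comm] at h2
    exact h2
  -- cardinality of nonzero eigenvalues
  have hcard : Fintype.card {j : Fin k // μ j ≠ 0} = rT := by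
    have h1 : Fintype.card {j : Fin k // μ j ≠ 0} ≤ finrank ℝ ((LinearMap.ker T)ᗮ) := by
      have hli : LinearIndependent ℝ (fun j : {j : Fin k // μ j ≠ 0} =>
          (⟨b j.1, hmemP j.1 j.2⟩ : ((LinearMap.ker T)ᗮ))) := by
        apply LinearIndependent.of_comp ((LinearMap.ker T)ᗮ).subtype
        exact b.orthonormal.linearIndependent.comp _ Subtype.val_injective
      exact hli.fintype_card_le_finrank
    have h2 : Fintype.card {j : Fin k // ¬ (μ j ≠ 0)} ≤ finrank ℝ (LinearMap.ker T) := by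
      have hli : LinearIndependent ℝ (fun j : {j : Fin k // ¬ (μ j ≠ 0)} =>
          (⟨b j.1, LinearMap.mem_ker.mpr (h0 j.1 (not_not.mp j.2))⟩ :
            (LinearMap.ker T))) := by
        apply LinearIndependent.of_comp (LinearMap.ker T).subtype
        exact b.orthonormal.linearIndependent.comp _ Subtype.val_injective
      exact hli.fintype_card_le_finrank
    have h3 : Fintype.card {j : Fin k // ¬ (μ j ≠ 0)} =
        k - Fintype.card {j : Fin k // μ j ≠ 0} := by
      rw [Fintype.card_subtype_compl]
      simp
    have h4 : Fintype.card {j : Fin k // μ j ≠ 0} ≤ k := by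
      simpa using Fintype.card_subtype_le _
    have h5 : finrank ℝ (LinearMap.range T) + finrank ℝ (LinearMap.ker T) = k := by
      rw [LinearMap.finrank_range_add_finrank_ker]; exact hd
    have h6 : finrank ℝ (LinearMap.ker T) + finrank ℝ ((LinearMap.ker T)ᗮ) = k := by
      rw [Submodule.finrank_add_finrank_orthogonal]; exact hd
    omega
  set e : Fin rT ≃ {j : Fin k // μ j ≠ 0} := (Fintype.equivFinOfCardEq hcard).symm with he
  set v : Fin rT → EuclideanSpace ℝ (Fin k) := fun j => b (e j) with hv
  have hμpos : ∀ j, 0 < μ (e j).1 := fun j => lt_of_le_of_ne (hμ0 _) (Ne.symm (e j).2)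
  set σ : Fin rT → ℝ := fun j => Real.sqrt (μ (e j).1) with hσ
  have hσpos : ∀ j, 0 < σ j := fun j => Real.sqrt_pos.mpr (hμpos j)
  have hσsq : ∀ j, σ j * σ j = μ (e j).1 := fun j => Real.mul_self_sqrt (hμ0 _)
  set u : Fin rT → EuclideanSpace ℝ (Fin m) := fun j => (σ j)⁻¹ • T (v j) with hu
  have hvon : Orthonormal ℝ v :=
    b.orthonormal.comp _ (Subtype.val_injective.comp e.injective)
  have hTv : ∀ j, T (v j) = σ j • u j := by
    intro j
    rw [hu]
    rw [smul_smul, mul_inv_cancel₀ (hσpos j).ne', one_smul]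
  have hvmem : ∀ j, v j ∈ (LinearMap.ker T)ᗮ := fun j => hmemP _ (e j).2
  have humem : ∀ j, u j ∈ LinearMap.range T := fun j =>
    Submodule.smul_mem _ _ (LinearMap.mem_range_self _ _)
  have huon : Orthonormal ℝ u := by
    rw [orthonormal_iff_ite]
    intro j l
    rw [hu]
    simp only [real_inner_smul_left, real_inner_smul_right]
    rw [hv]
    rw [hTb]
    rcases eq_or_ne j l with rfl | hne
    · rw [if_pos rfl, hbb, ← hσsq j]
      have := (hσpos j).ne'
      field_simp
    · rw [if_neg hne]
      have : ⟪b (e j).1, b (e l).1⟫ = 0 := by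
        have := orthonormal_iff_ite.mp b.orthonormal (e j).1 (e l).1
        rw [this, if_neg]
        intro hcon
        exact hne (e.injective (Subtype.val_injective hcon))
      rw [this]
      ring
  refine ⟨v, u, σ, hvon, huon, hσpos, hTv, hvmem, humem, ?_⟩
  intro x hx
  have hrepr : ∑ j, ⟪b j, x⟫ • b j = x := b.sum_repr' x
  rw [← hrepr, map_sum]
  apply Finset.sum_eq_zero
  intro j _
  rw [_root_.map_smul]
  by_cases hj : μ j = 0
  · rw [h0 j hj, smul_zero]
  · have : ⟪b j, x⟫ = 0 := by
      have h5 := hx (e.symm ⟨j, hj⟩)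
      simp only [hv] at h5
      rwa [e.apply_symm_apply] at h5
    rw [this, zero_smul]

/-- **SVD of a complex.** Here `A i : Matrix (Fin (c i)) (Fin (c (i+1))) ℝ` represents the
differential `A_{i+1} : ℝ^{c_{i+1}} → ℝ^{c_i}` of the complex, `A₀ = A_{n+1} = 0` being the
convention (maps with index `≥ n+1`, i.e. `A i` for `n ≤ i`, vanish).  `r (i+1) = rank A_{i+1}`
and `r 0 = 0`.  The conclusion states the existence of orthogonal matrices `U i ∈ O(c i)` and
positive diagonal `Σ` such that `(U i)ᵀ * A_{i+1} * U (i+1)` has as its only nonzero block the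
`r (i+1) × r (i+1)` positive diagonal block in block-row 2 (rows `r i, …, r i + r (i+1) - 1`)
and block-column 1 (columns `0, …, r (i+1) - 1`). -/
theorem svd_of_complex (n : ℕ) (c : ℕ → ℕ)
    (A : ∀ i : ℕ, Matrix (Fin (c i)) (Fin (c (i+1))) ℝ)
    (hcomplex : ∀ i, A i * A (i+1) = 0)
    (hzero : ∀ i, n ≤ i → A i = 0)
    (r : ℕ → ℕ) (hr0 : r 0 = 0) (hr : ∀ i, r (i+1) = (A i).rank)
    (h : ℕ → ℕ) (hh : ∀ i, h i = c i - (r i + r (i+1))) :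
    ∃ U : ∀ i : ℕ, Matrix (Fin (c i)) (Fin (c i)) ℝ,
      (∀ i, (U i)ᵀ * U i = 1) ∧
      ∀ i, ∃ σ : ℕ → ℝ,
        (∀ s, s < r (i+1) → 0 < σ s) ∧
        ∀ (j : Fin (c i)) (k : Fin (c (i+1))),
          ((U i)ᵀ * A i * U (i+1)) j k =
            if (j : ℕ) = r i + (k : ℕ) ∧ (k : ℕ) < r (i+1) then σ (k : ℕ) else 0 := by
  classical
  have hrank : ∀ i, r (i+1) = finrank ℝ (LinearMap.range (Matrix.toEuclideanLin (A i))) := by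
    intro i
    rw [hr i, Matrix.toEuclideanLin_eq_toLin]
    exact Matrix.rank_eq_finrank_range_toLin (A i) (PiLp.basisFun 2 ℝ (Fin (c i)))
      (PiLp.basisFun 2 ℝ (Fin (c (i+1))))
  choose vv uu ss hvon huon hsspos hTv hvmem humem hker using
    fun i => exists_svd (Matrix.toEuclideanLin (A i)) (r (i+1)) (hrank i)
  -- composition is zero
  have hcomp : ∀ i (x : EuclideanSpace ℝ (Fin (c (i+2)))),
      Matrix.toEuclideanLin (A i) (Matrix.toEuclideanLin (A (i+1)) x) = 0 := by
    intro i x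
    have hz : ∀ (a : Fin (c i)) (d : Fin (c (i+2))), ∑ b, A i a b * A (i+1) b d = 0 := by
      intro a d
      have := congrFun (congrFun (hcomplex i) a) d
      simpa [Matrix.mul_apply] using this
    ext a
    simp only [toEuclideanLin_apply', Finset.mul_sum]
    rw [Finset.sum_comm]
    have : ∀ d : Fin (c (i+2)),
        (∑ b, A i a b * (A (i+1) b d * x d)) = (∑ b, A i a b * A (i+1) b d) * x d := by
      intro d
      rw [Finset.sum_mul]
      exact Finset.sum_congr rfl fun b _ => by ring
    rw [Finset.sum_congr rfl fun d _ => this d]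
    simp [hz]
  have hu_ker : ∀ i (kk : Fin (r (i+2))),
      Matrix.toEuclideanLin (A i) (uu (i+1) kk) = 0 := by
    intro i kk
    obtain ⟨y, hy⟩ := humem (i+1) kk
    rw [← hy]
    exact hcomp i y
  set vp := vpAux (c := c) (r := r) vv with hvpdef
  have hvp_on : ∀ i, Orthonormal ℝ (vp i) := by
    intro i
    match i with
    | 0 =>
      rw [orthonormal_iff_ite]
      intro j
      exact (Fin.cast hr0 j).elim0
    | (m+1) => exact hvon m
  have hcross : ∀ i (j : Fin (r i)) (kk : Fin (r (i+1))), ⟪vp i j, uu i kk⟫ = 0 := by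
    intro i j kk
    match i with
    | 0 => exact (Fin.cast hr0 j).elim0
    | (m+1) =>
      have h1 : uu (m+1) kk ∈ LinearMap.ker (Matrix.toEuclideanLin (A m)) :=
        LinearMap.mem_ker.mpr (hu_ker m kk)
      have h2 := hvmem m j
      rw [real_inner_comm]
      exact (Submodule.mem_orthogonal _ _).mp h2 _ h1
  have hsum_on : ∀ i, Orthonormal ℝ (Sum.elim (vp i) (uu i)) := by
    intro i
    rw [orthonormal_iff_ite]
    rintro (j | j) (l | l)
    · simpa using orthonormal_iff_ite.mp (hvp_on i) j l
    · simpa using hcross i j l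
    · simp only [Sum.elim_inl, Sum.elim_inr]
      rw [real_inner_comm]
      simpa using hcross i l j
    · simpa using orthonormal_iff_ite.mp (huon i) j l
  have hcard : ∀ i, r i + r (i+1) ≤ c i := by
    intro i
    have := (hsum_on i).linearIndependent.fintype_card_le_finrank
    simpa [Fintype.card_sum] using this
  -- the partial families
  have hw_on : ∀ i, Orthonormal ℝ
      (Set.restrict {j : Fin (c i) | (j : ℕ) < r i + r (i+1)} (wAux (vp i) (uu i))) := by
    intro i
    rw [orthonormal_iff_ite]
    rintro ⟨j, hj⟩ ⟨l, hl⟩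
    rw [Set.mem_setOf_eq] at hj hl
    show ⟪wAux (vp i) (uu i) j, wAux (vp i) (uu i) l⟫ = _
    rw [wAux_eq_elim (vp i) (uu i) j hj, wAux_eq_elim (vp i) (uu i) l hl,
      orthonormal_iff_ite.mp (hsum_on i)]
    congr 1
    simp only [eq_iff_iff]
    constructor
    · intro hid
      exact Subtype.ext (idxAux_inj hj hl hid)
    · intro hid
      have : j = l := congrArg Subtype.val hid
      subst this
      rfl
  have hext : ∀ i, ∃ b : OrthonormalBasis (Fin (c i)) ℝ (EuclideanSpace ℝ (Fin (c i))),
      ∀ j ∈ {j : Fin (c i) | (j : ℕ) < r i + r (i+1)}, b j = wAux (vp i) (uu i) j :=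
    fun i => Orthonormal.exists_orthonormalBasis_extension_of_card_eq
      (by simp) (hw_on i)
  choose B hB using hext
  refine ⟨fun i => Matrix.of (fun j k => B i k j), ?_, ?_⟩
  · intro i
    ext j k
    rw [Matrix.mul_apply, Matrix.one_apply]
    have := orthonormal_iff_ite.mp (B i).orthonormal j k
    rw [euclid_inner_eq] at this
    simpa using this
  · intro i
    refine ⟨fun t => if ht : t < r (i+1) then ss i ⟨t, ht⟩ else 1, ?_, ?_⟩
    · intro t ht
      dsimp only
      rw [dif_pos ht]
      exact hsspos i ⟨t, ht⟩
    intro j k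
    beta_reduce
    have hentry : ((Matrix.of fun a b => B i b a)ᵀ * A i *
        (Matrix.of fun a b => B (i+1) b a)) j k
        = ⟪B i j, Matrix.toEuclideanLin (A i) (B (i+1) k)⟫ := by
      rw [euclid_inner_eq]
      simp only [Matrix.mul_apply, Matrix.transpose_apply, Matrix.of_apply,
        toEuclideanLin_apply', Finset.sum_mul, Finset.mul_sum]
      rw [Finset.sum_comm]
      exact Finset.sum_congr rfl fun a _ => Finset.sum_congr rfl fun b _ => by ring
    rw [hentry]
    by_cases hk : (k : ℕ) < r (i+1)
    · have hkmem : k ∈ {j : Fin (c (i+1)) | (j : ℕ) < r (i+1) + r (i+2)} := by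
        rw [Set.mem_setOf_eq]; omega
      have hBk : B (i+1) k = vv i ⟨k, hk⟩ := by
        rw [hB (i+1) k hkmem, wAux_of_lt _ _ k hk]
        rw [hvpdef, vpAux_succ]
      rw [hBk, hTv i ⟨k, hk⟩, real_inner_smul_right]
      have hj0 : r i + (k : ℕ) < c i := by have := hcard i; omega
      have hBj0 : B i ⟨r i + (k : ℕ), hj0⟩ = uu i ⟨k, hk⟩ := by
        rw [hB i _ (by rw [Set.mem_setOf_eq]; simp; omega),
          wAux_mid _ _ _ (by simp) (by simp [hk])]
        exact congrArg (uu i) (Fin.ext (by simp))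
      rw [← hBj0]
      rw [orthonormal_iff_ite.mp (B i).orthonormal j ⟨r i + (k : ℕ), hj0⟩]
      by_cases hjk : (j : ℕ) = r i + (k : ℕ)
      · rw [if_pos (Fin.ext hjk), if_pos ⟨hjk, hk⟩, dif_pos hk, mul_one]
      · rw [if_neg (fun hcon => hjk (by simpa using congrArg Fin.val hcon)),
          if_neg (fun hcon => hjk hcon.1), mul_zero]
    · have hTk : Matrix.toEuclideanLin (A i) (B (i+1) k) = 0 := by
        apply hker i
        intro j'
        have hj'c : (j' : ℕ) < c (i+1) := by
          have h1 := j'.2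
          have h2 := hcard (i+1)
          omega
        have hBj' : B (i+1) ⟨(j' : ℕ), hj'c⟩ = vv i j' := by
          rw [hB (i+1) _ (by rw [Set.mem_setOf_eq]; simp; have := j'.2; omega),
            wAux_of_lt _ _ _ (by simpa using j'.2)]
          rw [hvpdef, vpAux_succ]
        rw [← hBj']
        rw [orthonormal_iff_ite.mp (B (i+1)).orthonormal ⟨(j' : ℕ), hj'c⟩ k, if_neg]
        intro hcon
        have := congrArg Fin.val hcon
        simp only at this
        have := j'.2
        omega
      rw [hTk, inner_zero_right, if_neg (fun hcon => hk hcon.2)]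
end

section
/- Let A₁,…,Aₙ form a complex of real matrices with A₀ = A_{n+1} = 0, and let Aᵢ⁺ be Moore–Penrose pseudoinverses. Then the map id_{ℝ^{cᵢ}} − (Aᵢ⁺ Aᵢ + A_{i+1} A_{i+1}⁺) is the orthogonal projection of ℝ^{cᵢ} onto the subspace Hᵢ = ker Aᵢ ∩ (image A_{i+1})ᗮ (the harmonic representatives of the homology). -/
open Matrix

/-- `Ap` satisfies the four Penrose relations for `A`. -/
def IsMoorePenrose {m k : ℕ} (A : Matrix (Fin m) (Fin k) ℝ)
    (Ap : Matrix (Fin k) (Fin m) ℝ) : Prop :=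
  A * Ap * A = A ∧ Ap * A * Ap = Ap ∧ (A * Ap)ᵀ = A * Ap ∧ (Ap * A)ᵀ = Ap * A

lemma toEuclideanLin_mul_apply {a b c : ℕ} (M : Matrix (Fin a) (Fin b) ℝ)
    (N : Matrix (Fin b) (Fin c) ℝ) (v : EuclideanSpace ℝ (Fin c)) :
    toEuclideanLin (M * N) v = toEuclideanLin M (toEuclideanLin N v) := by
  simp [Matrix.toEuclideanLin_apply, Matrix.mulVec_mulVec]

/-- **Projection to homology.** With `A = A_i`, `B = A_{i+1}`, `A * B = 0`, and Moore–Penrose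
pseudoinverses `Ap`, `Bp`, the matrix `id - (A_i⁺ A_i + A_{i+1} A_{i+1}⁺)` is the orthogonal
projection (symmetric idempotent) of `ℝ^{c_i}` onto `H_i = ker A_i ∩ (image A_{i+1})ᗮ`. -/
theorem projection_to_homology (m k l : ℕ)
    (A : Matrix (Fin m) (Fin k) ℝ) (B : Matrix (Fin k) (Fin l) ℝ)
    (hAB : A * B = 0)
    (Ap : Matrix (Fin k) (Fin m) ℝ) (Bp : Matrix (Fin l) (Fin k) ℝ)
    (hAp : IsMoorePenrose A Ap) (hBp : IsMoorePenrose B Bp)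
    (P : Matrix (Fin k) (Fin k) ℝ) (hP : P = 1 - (Ap * A + B * Bp)) :
    Pᵀ = P ∧ P * P = P ∧
    LinearMap.range (toEuclideanLin P) =
      LinearMap.ker (toEuclideanLin A) ⊓ (LinearMap.range (toEuclideanLin B))ᗮ := by
  obtain ⟨hA1, hA2, hA3, hA4⟩ := hAp
  obtain ⟨hB1, hB2, hB3, hB4⟩ := hBp
  have hQQ : Ap * A * (Ap * A) = Ap * A := by
    calc Ap * A * (Ap * A) = Ap * A * Ap * A := by rw [Matrix.mul_assoc (Ap * A)]
    _ = Ap * A := by rw [hA2]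
  have hRR : B * Bp * (B * Bp) = B * Bp := by
    calc B * Bp * (B * Bp) = B * Bp * B * Bp := by rw [Matrix.mul_assoc (B * Bp)]
    _ = B * Bp := by rw [hB1]
  have hQR : Ap * A * (B * Bp) = 0 := by
    rw [Matrix.mul_assoc, ← Matrix.mul_assoc A, hAB, Matrix.zero_mul, Matrix.mul_zero]
  have hRQ : B * Bp * (Ap * A) = 0 := by
    have := congrArg Matrix.transpose hQR
    simpa [Matrix.transpose_mul, hA4, hB3] using this
  have hPT : Pᵀ = P := by
    subst hP
    simp [Matrix.transpose_sub, Matrix.transpose_add, hA4, hB3]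
  have hPP : P * P = P := by
    subst hP
    simp only [Matrix.sub_mul, Matrix.mul_sub, Matrix.add_mul, Matrix.mul_add,
      Matrix.one_mul, Matrix.mul_one, hQQ, hRR, hQR, hRQ]
    abel
  have hAP : A * P = 0 := by
    subst hP
    have h1 : A * (Ap * A) = A := by rw [← Matrix.mul_assoc]; exact hA1
    have h2 : A * (B * Bp) = 0 := by rw [← Matrix.mul_assoc, hAB, Matrix.zero_mul]
    simp [Matrix.mul_sub, Matrix.mul_add, h1, h2]
  have hPB : P * B = 0 := by
    subst hP
    have h1 : Ap * A * B = 0 := by rw [Matrix.mul_assoc, hAB, Matrix.mul_zero]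
    have h2 : B * Bp * B = B := hB1
    simp [Matrix.sub_mul, Matrix.add_mul, h1, h2]
  have hBTP : Bᵀ * P = 0 := by
    have := congrArg Matrix.transpose hPB
    simpa [Matrix.transpose_mul, hPT] using this
  refine ⟨hPT, hPP, ?_⟩
  -- range P = fixed points of P
  have hfix : ∀ x : EuclideanSpace ℝ (Fin k),
      x ∈ LinearMap.range (toEuclideanLin P) ↔ toEuclideanLin P x = x := by
    intro x
    constructor
    · rintro ⟨y, rfl⟩
      rw [← toEuclideanLin_mul_apply, hPP]
    · intro h
      exact ⟨x, h⟩
  ext x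
  rw [hfix, Submodule.mem_inf, LinearMap.mem_ker, Submodule.mem_orthogonal]
  have hadj : Matrix.toEuclideanLin Bᵀ = LinearMap.adjoint (Matrix.toEuclideanLin B) := by
    rw [← Matrix.toEuclideanLin_conjTranspose_eq_adjoint]
    congr 1
  constructor
  · intro hx
    constructor
    · rw [← hx, ← toEuclideanLin_mul_apply, hAP]
      simp [Matrix.toEuclideanLin_apply]
    · rintro u ⟨y, rfl⟩
      have hBx : toEuclideanLin Bᵀ x = 0 := by
        rw [← hx, ← toEuclideanLin_mul_apply, hBTP]
        simp [Matrix.toEuclideanLin_apply]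
      rw [hadj] at hBx
      calc inner ℝ (toEuclideanLin B y) x
          = inner ℝ y (LinearMap.adjoint (toEuclideanLin B) x) :=
            (LinearMap.adjoint_inner_right _ _ _).symm
      _ = (0 : ℝ) := by rw [hBx, inner_zero_right]
  · rintro ⟨hxA, hxB⟩
    have hBx : toEuclideanLin Bᵀ x = 0 := by
      rw [hadj]
      have h0 : inner ℝ (LinearMap.adjoint (toEuclideanLin B) x)
          (LinearMap.adjoint (toEuclideanLin B) x) = (0 : ℝ) := by
        rw [LinearMap.adjoint_inner_left, real_inner_comm]
        exact hxB _ ⟨_, rfl⟩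
      exact inner_self_eq_zero.mp h0
    have hQx : toEuclideanLin (Ap * A) x = 0 := by
      rw [toEuclideanLin_mul_apply, hxA, map_zero]
    have hRmat : B * Bp = Bpᵀ * Bᵀ := by
      rw [← Matrix.transpose_mul, hB3]
    have hRx : toEuclideanLin (B * Bp) x = 0 := by
      rw [hRmat, toEuclideanLin_mul_apply, hBx, map_zero]
    rw [hP]
    have : toEuclideanLin (1 - (Ap * A + B * Bp)) x
        = toEuclideanLin (1 : Matrix (Fin k) (Fin k) ℝ) x
          - (toEuclideanLin (Ap * A) x + toEuclideanLin (B * Bp) x) := by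
      simp [map_sub, map_add]
    rw [this, hQx, hRx]
    simp [Matrix.toEuclideanLin_apply]
end

section
/- Let K ⊆ ℝ be a subfield and A a matrix with entries in K. Then the Moore–Penrose pseudoinverse A⁺ of A (taken over ℝ) has all entries in K. -/
open Matrix

open Polynomial

set_option maxHeartbeats 1000000
set_option synthInstance.maxHeartbeats 400000

section Aux

variable {n : ℕ}

lemma transpose_aeval_real (M : Matrix (Fin n) (Fin n) ℝ) (p : ℝ[X]) :
    (Polynomial.aeval M p)ᵀ = Polynomial.aeval Mᵀ p := by
  induction p using Polynomial.induction_on' with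
  | add p q hp hq => simp [hp, hq]
  | monomial k a =>
      simp [aeval_monomial, Algebra.algebraMap_eq_smul_one, transpose_mul, transpose_pow,
        smul_mul_assoc, mul_smul_comm]

lemma commute_aeval_self (M : Matrix (Fin n) (Fin n) ℝ) (p : ℝ[X]) :
    Polynomial.aeval M p * M = M * Polynomial.aeval M p := by
  have h : Polynomial.aeval M (p * X) = Polynomial.aeval M (X * p) := by rw [mul_comm]
  simpa [_root_.map_mul] using h

lemma symm_nilpotent_zero (M : Matrix (Fin n) (Fin n) ℝ) (hs : Mᵀ = M)
    (e : ℕ) (he : M ^ e = 0) : M = 0 := by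
  have key : ∀ j : ℕ, M ^ (2 ^ j) = 0 → M = 0 := by
    intro j
    induction j with
    | zero => intro h; simpa using h
    | succ j ih =>
        intro h
        apply ih
        have h2 : M ^ 2 ^ j * (M ^ 2 ^ j)ᴴ = 0 := by
          rw [conjTranspose_eq_transpose_of_trivial, transpose_pow, hs, ← pow_add]
          rw [← h]; ring_nf
        exact (Matrix.self_mul_conjTranspose_eq_zero).mp h2
  apply key e
  have hle : e ≤ 2 ^ e := Nat.le_of_lt (Nat.lt_two_pow_self (n := e))
  calc M ^ 2 ^ e = M ^ e * M ^ (2 ^ e - e) := by rw [← pow_add, Nat.add_sub_cancel' hle]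
    _ = 0 := by rw [he, zero_mul]

lemma mp_unique {m k : ℕ} (A : Matrix (Fin m) (Fin k) ℝ)
    (P Q : Matrix (Fin k) (Fin m) ℝ)
    (hP : IsMoorePenrose A P) (hQ : IsMoorePenrose A Q) : P = Q := by
  obtain ⟨hP1, hP2, hP3, hP4⟩ := hP
  obtain ⟨hQ1, hQ2, hQ3, hQ4⟩ := hQ
  have hAP : A * P = A * Q := by
    calc A * P = (A * P)ᵀ := hP3.symm
      _ = Pᵀ * Aᵀ := by rw [transpose_mul]
      _ = Pᵀ * (A * Q * A)ᵀ := by rw [hQ1]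
      _ = Pᵀ * (Aᵀ * (A * Q)ᵀ) := by rw [transpose_mul (A*Q) A]
      _ = (Pᵀ * Aᵀ) * (A * Q) := by rw [hQ3, Matrix.mul_assoc]
      _ = (A * P)ᵀ * (A * Q) := by rw [transpose_mul]
      _ = (A * P) * (A * Q) := by rw [hP3]
      _ = (A * P * A) * Q := by rw [Matrix.mul_assoc (A*P) A Q]
      _ = A * Q := by rw [hP1]
  have hPA : P * A = Q * A := by
    calc P * A = (P * A)ᵀ := hP4.symm
      _ = Aᵀ * Pᵀ := by rw [transpose_mul]
      _ = (A * Q * A)ᵀ * Pᵀ := by rw [hQ1]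
      _ = ((Q * A)ᵀ * Aᵀ) * Pᵀ := by rw [Matrix.mul_assoc A Q A, transpose_mul A (Q*A)]
      _ = (Q * A) * (Aᵀ * Pᵀ) := by rw [hQ4, Matrix.mul_assoc]
      _ = (Q * A) * (P * A)ᵀ := by rw [transpose_mul]
      _ = (Q * A) * (P * A) := by rw [hP4]
      _ = Q * (A * P * A) := by rw [Matrix.mul_assoc Q A (P*A), ← Matrix.mul_assoc A P A]
      _ = Q * A := by rw [hP1]
  calc P = P * A * P := hP2.symm
    _ = Q * A * P := by rw [hPA]
    _ = Q * (A * P) := by rw [Matrix.mul_assoc]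
    _ = Q * (A * Q) := by rw [hAP]
    _ = Q * A * Q := by rw [Matrix.mul_assoc]
    _ = Q := hQ2

lemma penrose_of_poly {m k : ℕ} (A : Matrix (Fin m) (Fin k) ℝ)
    (q : ℝ[X]) (hq : (A * Aᵀ) * (A * Aᵀ) * Polynomial.aeval (A * Aᵀ) q = A * Aᵀ) :
    IsMoorePenrose A (Aᵀ * Polynomial.aeval (A * Aᵀ) q) := by
  set S := A * Aᵀ with hS
  set qS := Polynomial.aeval S q with hqS
  have hSsym : Sᵀ = S := by rw [hS, transpose_mul, transpose_transpose]
  have hqsym : qSᵀ = qS := by rw [hqS, transpose_aeval_real, hSsym]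
  have hcomm : qS * S = S * qS := commute_aeval_self S q
  have hSP : S * (S * qS) = S := by rw [← Matrix.mul_assoc]; exact hq
  have hPS : (S * qS) * S = S := by rw [Matrix.mul_assoc, hcomm, hSP]
  have ht : (1 - S * qS)ᵀ = 1 - S * qS := by
    rw [transpose_sub, transpose_one, transpose_mul, hqsym, hSsym, hcomm]
  have hz : (1 - S * qS) * S = 0 := by rw [sub_mul, one_mul, hPS, sub_self]
  have hproj : S * qS * A = A := by
    have hz2 : ((1 - S * qS) * A) * ((1 - S * qS) * A)ᴴ = 0 := by
      rw [conjTranspose_eq_transpose_of_trivial, transpose_mul, ht,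
          Matrix.mul_assoc (1 - S * qS) A (Aᵀ * (1 - S * qS)),
          ← Matrix.mul_assoc A Aᵀ (1 - S * qS), ← hS,
          ← Matrix.mul_assoc (1 - S * qS) S (1 - S * qS), hz, Matrix.zero_mul]
    have h0 : (1 - S * qS) * A = 0 := (Matrix.self_mul_conjTranspose_eq_zero).mp hz2
    rw [Matrix.sub_mul, Matrix.one_mul, sub_eq_zero] at h0
    exact h0.symm
  have hAt : Aᵀ * (qS * S) = Aᵀ := by
    have h := congrArg Matrix.transpose hproj
    rwa [transpose_mul, transpose_mul, hqsym, hSsym] at h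
  refine ⟨?_, ?_, ?_, ?_⟩
  · rw [← Matrix.mul_assoc A Aᵀ qS, ← hS]
    exact hproj
  · calc Aᵀ * qS * A * (Aᵀ * qS)
        = Aᵀ * (qS * S) * qS := by
          rw [Matrix.mul_assoc (Aᵀ * qS) A (Aᵀ * qS), ← Matrix.mul_assoc A Aᵀ qS, ← hS,
            Matrix.mul_assoc Aᵀ qS (S * qS), ← Matrix.mul_assoc qS S qS,
            ← Matrix.mul_assoc Aᵀ (qS * S) qS]
      _ = Aᵀ * qS := by rw [hAt]
  · rw [← Matrix.mul_assoc A Aᵀ qS, ← hS, transpose_mul, hqsym, hSsym, hcomm]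
  · rw [transpose_mul, transpose_mul, hqsym, transpose_transpose, ← Matrix.mul_assoc]

lemma key_poly {n : ℕ} (S : Matrix (Fin n) (Fin n) ℝ) (hsym : Sᵀ = S)
    (c : ℝ) (hc : c ≠ 0) (g h : ℝ[X]) (hgh : g = C c + X * h) (e : ℕ)
    (hann : Polynomial.aeval S (X ^ e * g) = 0) :
    S * S * Polynomial.aeval S (-(C c⁻¹ * h)) = S := by
  have hM : S * Polynomial.aeval S g = 0 := by
    apply symm_nilpotent_zero _ ?_ (e + 1)
    · have h1 : S * Polynomial.aeval S g = Polynomial.aeval S (X * g) := by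
        rw [_root_.map_mul, aeval_X]
      rw [h1, ← _root_.map_pow]
      have h2 : (X * g) ^ (e + 1) = (X ^ e * g) * (X * g ^ e) := by ring
      rw [h2, _root_.map_mul, hann, Matrix.zero_mul]
    · rw [transpose_mul, transpose_aeval_real, hsym, commute_aeval_self]
  have hpoly : (X : ℝ[X]) ^ 2 * (-(C c⁻¹ * h)) = X - C c⁻¹ * (X * g) := by
    have hC : (C c⁻¹ : ℝ[X]) * C c = 1 := by rw [← C_mul, inv_mul_cancel₀ hc, C_1]
    rw [hgh]
    linear_combination (X : ℝ[X]) * hC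
  have hev := congrArg (Polynomial.aeval S) hpoly
  simp only [_root_.map_mul, _root_.map_sub, _root_.map_pow, aeval_X] at hev
  rw [hM, mul_zero, sub_zero] at hev
  calc S * S * Polynomial.aeval S (-(C c⁻¹ * h))
      = S ^ 2 * Polynomial.aeval S (-(C c⁻¹ * h)) := by rw [sq]
    _ = S := hev

lemma map_algebraMap_matrix {n : ℕ} (K : Subfield ℝ) (a : K) :
    (algebraMap K (Matrix (Fin n) (Fin n) K) a).map (K.subtype)
      = algebraMap ℝ (Matrix (Fin n) (Fin n) ℝ) (K.subtype a) := by
  ext i j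
  simp only [Matrix.map_apply, Matrix.algebraMap_matrix_apply]
  split_ifs <;> simp

lemma map_aeval_subfield {n : ℕ} (K : Subfield ℝ) (S : Matrix (Fin n) (Fin n) K) (p : K[X]) :
    (Polynomial.aeval S p).map (K.subtype)
      = Polynomial.aeval (S.map (K.subtype)) (p.map (K.subtype : K →+* ℝ)) := by
  induction p using Polynomial.induction_on' with
  | add p q hp hq =>
      have h0 : Polynomial.aeval S (p + q) = Polynomial.aeval S p + Polynomial.aeval S q :=
        map_add (Polynomial.aeval S) p q
      have h1 : Polynomial.map (K.subtype : K →+* ℝ) (p + q) = p.map K.subtype + q.map K.subtype :=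
        Polynomial.map_add _
      rw [h0, h1, map_add (Polynomial.aeval (S.map (K.subtype))), ← hp, ← hq]
      ext i j
      simp only [Matrix.map_apply, Matrix.add_apply, map_add]
  | monomial d a =>
      rw [aeval_monomial, Polynomial.map_monomial, aeval_monomial]
      have h1 : ∀ (X Y : Matrix (Fin n) (Fin n) K),
          (X * Y).map (K.subtype) = X.map (K.subtype) * Y.map (K.subtype) :=
        fun X Y => Matrix.map_mul
      rw [h1, map_algebraMap_matrix]
      congr 1
      induction d with
      | zero => simp
      | succ d ih => rw [pow_succ, pow_succ, h1, ih]

end Aux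

/-- If all entries of `A` lie in a subfield `K ⊆ ℝ`, then all entries of its Moore–Penrose
pseudoinverse (taken over `ℝ`) lie in `K` as well. -/
theorem pseudoinverse_entries_mem_subfield (m k : ℕ) (K : Subfield ℝ)
    (A : Matrix (Fin m) (Fin k) ℝ) (hA : ∀ i j, A i j ∈ K)
    (Ap : Matrix (Fin k) (Fin m) ℝ) (hAp : IsMoorePenrose A Ap) :
    ∀ i j, Ap i j ∈ K := by
  classical
  set φ : K →+* ℝ := K.subtype with hφ
  set A' : Matrix (Fin m) (Fin k) K := Matrix.of (fun i j => (⟨A i j, hA i j⟩ : K)) with hA'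
  have hAm : A'.map φ = A := by ext i j; rfl
  set S' : Matrix (Fin m) (Fin m) K := A' * A'ᵀ with hS'
  have hSm : S'.map φ = A * Aᵀ := by
    rw [hS', Matrix.map_mul, Matrix.transpose_map, hAm]
  have hχ : S'.charpoly ≠ 0 := S'.charpoly_monic.ne_zero
  obtain ⟨g, hfac, hnd⟩ := S'.charpoly.exists_eq_pow_rootMultiplicity_mul_and_not_dvd hχ 0
  rw [C_0, sub_zero] at hfac hnd
  have hc : g.coeff 0 ≠ 0 := fun h0 => hnd (X_dvd_iff.mpr h0)
  have hcR : φ (g.coeff 0) ≠ 0 := fun h0 => hc (by apply Subtype.ext; simpa using h0)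
  have hCH : Polynomial.aeval (A * Aᵀ)
      ((X : ℝ[X]) ^ (S'.charpoly.rootMultiplicity 0) * (g.map φ)) = 0 := by
    have h1 := (S'.map φ).aeval_self_charpoly
    rw [Matrix.charpoly_map, hSm, hfac, Polynomial.map_mul, Polynomial.map_pow,
      Polynomial.map_X] at h1
    exact h1
  have hgh : g.map φ = C (φ (g.coeff 0)) + X * ((g.divX).map φ) := by
    conv_lhs => rw [← X_mul_divX_add g]
    rw [Polynomial.map_add, Polynomial.map_mul, Polynomial.map_X, Polynomial.map_C, add_comm]
  have hsym : (A * Aᵀ)ᵀ = A * Aᵀ := by rw [transpose_mul, transpose_transpose]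
  have hq := key_poly (A * Aᵀ) hsym (φ (g.coeff 0)) hcR (g.map φ) ((g.divX).map φ) hgh _ hCH
  have hmp := penrose_of_poly A (-(C (φ (g.coeff 0))⁻¹ * (g.divX).map φ)) hq
  have huniq := mp_unique A Ap
    (Aᵀ * Polynomial.aeval (A * Aᵀ) (-(C (φ (g.coeff 0))⁻¹ * (g.divX).map φ))) hAp hmp
  have hBmap : (A'ᵀ * Polynomial.aeval S' (-(C (g.coeff 0)⁻¹ * g.divX))).map φ
      = Aᵀ * Polynomial.aeval (A * Aᵀ) (-(C (φ (g.coeff 0))⁻¹ * (g.divX).map φ)) := by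
    rw [Matrix.map_mul, Matrix.transpose_map, hAm, map_aeval_subfield, hSm]
    congr 2
    rw [Polynomial.map_neg, Polynomial.map_mul, Polynomial.map_C, map_inv₀]
  intro i j
  rw [huniq, ← hBmap]
  simp only [Matrix.map_apply]
  exact SetLike.coe_mem _
end
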